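/- Define the operator c on functions ψ : ℝ → ℂ² by (cψ)(x) = 2i γ₊ ψ′(x) + β γ¹ ψ(x). Then for every twice-differentiable ψ : ℝ → ℂ²: (i) c anticommutes with the harmonic Lévy-Leblond Hamiltonian, H_LL(cψ)(x) + c(H_LLψ)(x) = 0 for all x; (ii) c squares to β² times the identity, c(cψ)(x) = β² ψ(x) for all x; and (iii) 2 H_LL(γ₊ψ)(x) = β ψ(x) − (cψ)(x) for all x (so that c agrees with β·Id − 2H_LLγ₊ as operators). -/

import Mathlib

open Matrix

noncomputable section

/-- The gamma matrix `γ¹ = [[1,0],[0,−1]]`. -/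
def γ1 : Matrix (Fin 2) (Fin 2) ℂ := !![1, 0; 0, -1]

/-- The gamma matrix `γ₊ = [[0,1],[0,0]]`. -/
def γp : Matrix (Fin 2) (Fin 2) ℂ := !![0, 1; 0, 0]

/-- The gamma matrix `γ₋ = [[0,0],[1,0]]`. -/
def γm : Matrix (Fin 2) (Fin 2) ℂ := !![0, 0; 1, 0]

/-- The harmonic Lévy-Leblond Hamiltonian:
`(H_LL ψ)(x) = β γ₋ ψ(x) − i γ¹ ψ′(x) + (k/2) x² γ₊ ψ(x)`. -/
def HLL (β k : ℝ) (ψ : ℝ → (Fin 2 → ℂ)) : ℝ → (Fin 2 → ℂ) :=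
  fun x => (β : ℂ) • γm.mulVec (ψ x) - Complex.I • γ1.mulVec (deriv ψ x)
    + ((k / 2 * x ^ 2 : ℝ) : ℂ) • γp.mulVec (ψ x)

/-- The lowering operator:
`(bψ)(x) = √(βk/2)·x·ψ(x) + ψ′(x) − i√(k/(2β)) γ₊ ψ(x)`. -/
def lower (β k : ℝ) (ψ : ℝ → (Fin 2 → ℂ)) : ℝ → (Fin 2 → ℂ) :=
  fun x => ((Real.sqrt (β * k / 2) * x : ℝ) : ℂ) • ψ x + deriv ψ x
    - (Complex.I * ((Real.sqrt (k / (2 * β)) : ℝ) : ℂ)) • γp.mulVec (ψ x)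

/-- The raising operator:
`(b†ψ)(x) = √(βk/2)·x·ψ(x) − ψ′(x) − i√(k/(2β)) γ₊ ψ(x)`. -/
def raise (β k : ℝ) (ψ : ℝ → (Fin 2 → ℂ)) : ℝ → (Fin 2 → ℂ) :=
  fun x => ((Real.sqrt (β * k / 2) * x : ℝ) : ℂ) • ψ x - deriv ψ x
    - (Complex.I * ((Real.sqrt (k / (2 * β)) : ℝ) : ℂ)) • γp.mulVec (ψ x)

/-- The operator `c`: `(cψ)(x) = 2i γ₊ ψ′(x) + β γ¹ ψ(x)`. -/
def cOp (β : ℝ) (ψ : ℝ → (Fin 2 → ℂ)) : ℝ → (Fin 2 → ℂ) :=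
  fun x => (2 * Complex.I) • γp.mulVec (deriv ψ x) + (β : ℂ) • γ1.mulVec (ψ x)

lemma hasDerivAt_mulVec (A : Matrix (Fin 2) (Fin 2) ℂ) {f : ℝ → Fin 2 → ℂ}
    {f' : Fin 2 → ℂ} {x : ℝ} (h : HasDerivAt f f' x) :
    HasDerivAt (fun y => A.mulVec (f y)) (A.mulVec f') x := by
  let L : (Fin 2 → ℂ) →L[ℝ] (Fin 2 → ℂ) :=
    LinearMap.toContinuousLinearMap (A.mulVecLin.restrictScalars ℝ)
  have := L.hasFDerivAt.comp_hasDerivAt x h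
  simpa [L, Function.comp_def] using this

/-- For every twice-differentiable `ψ : ℝ → ℂ²`:
(i) `c` anticommutes with the harmonic Lévy-Leblond Hamiltonian;
(ii) `c² = β²·Id`; and (iii) `2 H_LL(γ₊ψ) = βψ − cψ`. -/
theorem cOp_relations (β k : ℝ) (hβ : 0 < β) (hk : 0 < k)
    (ψ : ℝ → (Fin 2 → ℂ))
    (hψ1 : Differentiable ℝ ψ) (hψ2 : Differentiable ℝ (deriv ψ)) :
    (∀ x : ℝ, HLL β k (cOp β ψ) x + cOp β (HLL β k ψ) x = 0) ∧
    (∀ x : ℝ, cOp β (cOp β ψ) x = ((β ^ 2 : ℝ) : ℂ) • ψ x) ∧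
    (∀ x : ℝ, (2 : ℂ) • HLL β k (fun y => γp.mulVec (ψ y)) x
      = (β : ℂ) • ψ x - cOp β ψ x) := by
  have key : ∀ x : ℝ,
      deriv (cOp β ψ) x
        = (2 * Complex.I) • γp.mulVec (deriv (deriv ψ) x)
          + (β : ℂ) • γ1.mulVec (deriv ψ x) ∧
      deriv (HLL β k ψ) x
        = (β : ℂ) • γm.mulVec (deriv ψ x)
          - Complex.I • γ1.mulVec (deriv (deriv ψ) x)
          + (((k * x : ℝ)) : ℂ) • γp.mulVec (ψ x)
          + ((k / 2 * x ^ 2 : ℝ) : ℂ) • γp.mulVec (deriv ψ x) ∧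
      deriv (fun y => γp.mulVec (ψ y)) x = γp.mulVec (deriv ψ x) := by
    intro x
    have h1 : HasDerivAt ψ (deriv ψ x) x := (hψ1 x).hasDerivAt
    have h2 : HasDerivAt (deriv ψ) (deriv (deriv ψ) x) x := (hψ2 x).hasDerivAt
    have hg : HasDerivAt (fun y : ℝ => ((k / 2 * y ^ 2 : ℝ) : ℂ)) ((k * x : ℝ) : ℂ) x := by
      have : HasDerivAt (fun y : ℝ => (k / 2 * y ^ 2 : ℝ)) (k * x) x := by
        have h := (hasDerivAt_pow 2 x).const_mul (k/2)
        refine h.congr_deriv ?_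
        rw [show (2:ℕ) - 1 = 1 from rfl, pow_one]; push_cast; ring
      exact (Complex.ofRealCLM.hasFDerivAt.comp_hasDerivAt x this)
    refine ⟨?_, ?_, ?_⟩
    · have hc : HasDerivAt (cOp β ψ)
          ((2 * Complex.I) • γp.mulVec (deriv (deriv ψ) x)
            + (β : ℂ) • γ1.mulVec (deriv ψ x)) x := by
        unfold cOp
        exact ((hasDerivAt_mulVec γp h2).const_smul (2 * Complex.I)).add
          ((hasDerivAt_mulVec γ1 h1).const_smul (β : ℂ))
      exact hc.deriv
    · have hH : HasDerivAt (HLL β k ψ)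
          ((β : ℂ) • γm.mulVec (deriv ψ x)
            - Complex.I • γ1.mulVec (deriv (deriv ψ) x)
            + (((k * x : ℝ)) : ℂ) • γp.mulVec (ψ x)
            + ((k / 2 * x ^ 2 : ℝ) : ℂ) • γp.mulVec (deriv ψ x)) x := by
        unfold HLL
        have := (((hasDerivAt_mulVec γm h1).const_smul (β : ℂ)).sub
            ((hasDerivAt_mulVec γ1 h2).const_smul Complex.I)).add
            (hg.smul (hasDerivAt_mulVec γp h1))
        refine this.congr_deriv ?_
        abel
      exact hH.deriv
    · exact (hasDerivAt_mulVec γp h1).deriv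
  refine ⟨?_, ?_, ?_⟩
  · intro x
    obtain ⟨hc, hH, -⟩ := key x
    simp only [HLL, cOp] at hc hH ⊢
    rw [hc, hH]
    funext i
    fin_cases i <;>
      simp [γ1, γp, γm, Matrix.mulVec, dotProduct, Fin.sum_univ_two]
    all_goals ring_nf
  · intro x
    obtain ⟨hc, -, -⟩ := key x
    simp only [HLL, cOp] at hc ⊢
    rw [hc]
    funext i
    fin_cases i <;>
      simp [γ1, γp, γm, Matrix.mulVec, dotProduct, Fin.sum_univ_two]
    all_goals ring_nf
  · intro x
    obtain ⟨-, -, hγ⟩ := key x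
    simp only [HLL, cOp] at hγ ⊢
    rw [hγ]
    funext i
    fin_cases i <;>
      simp [γ1, γp, γm, Matrix.mulVec, dotProduct, Fin.sum_univ_two]
    all_goals ring_nf


end
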